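/- Let P, Q be nonzero coprime polynomials over F_q with deg P > deg Q ≥ 1, let r = deg P − deg Q, n = deg Q, and set Y = ⋃_{i=1}^{∞} [q^{−r·i−n}, q^{−r·i}) ⊂ ℝ. Let α ∈ F_q((X^{-1})) have P/Q-digit expansion with digit string (s_i)_{i ≤ k}. Then: there exists i₀ such that for all i ≥ i₀, |{α·(P/Q)^i}| ∈ Y ∪ {0}, if and only if the digit string of α is eventually minimal (i.e., deg s_{−i} < deg Q for all sufficiently large i) — where for α ≠ 0, {·} denotes the fractional part in F_q((X^{-1})) and |β| = q^{deg β} (with |0| = 0). -/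

import Mathlib

open Polynomial
open scoped Classical

noncomputable def polyToLS {Fq : Type*} [Field Fq] (p : Polynomial Fq) :
    LaurentSeries Fq :=
  ∑ i ∈ p.support, HahnSeries.single (-(i : ℤ)) (p.coeff i)

noncomputable def ratToLS {Fq : Type*} [Field Fq] (f : RatFunc Fq) :
    LaurentSeries Fq :=
  polyToLS f.num / polyToLS f.denom

namespace PQM
variable {Fq : Type*} [Field Fq]

noncomputable def lsX : LaurentSeries Fq := HahnSeries.single (-1 : ℤ) 1

lemma coeff_finsetSum {ι : Type*} (s : Finset ι) (f : ι → LaurentSeries Fq) (e : ℤ) :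
    (∑ i ∈ s, f i).coeff e = ∑ i ∈ s, (f i).coeff e := by
  classical
  induction s using Finset.induction_on with
  | empty => simp [HahnSeries.coeff_zero]
  | insert _ _ h ih => simp [Finset.sum_insert h, HahnSeries.coeff_add, ih]

lemma polyToLS_eq_aeval (p : Polynomial Fq) : polyToLS p = Polynomial.aeval (lsX : LaurentSeries Fq) p := by
  rw [Polynomial.aeval_def, Polynomial.eval₂_eq_sum, Polynomial.sum_def, polyToLS]
  refine Finset.sum_congr rfl fun i _ => ?_
  rw [lsX, HahnSeries.single_pow]
  have : algebraMap Fq (LaurentSeries Fq) (p.coeff i) = HahnSeries.single (0 : ℤ) (p.coeff i) := by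
    rw [HahnSeries.algebraMap_apply', PowerSeries.algebraMap_apply, HahnSeries.ofPowerSeries_C, HahnSeries.C_apply]
    simp
  rw [this, HahnSeries.single_mul_single]
  simp [nsmul_eq_mul]

lemma polyToLS_coeff_neg (p : Polynomial Fq) (i : ℕ) :
    (polyToLS p).coeff (-(i : ℤ)) = p.coeff i := by
  classical
  rw [polyToLS, coeff_finsetSum]
  by_cases hi : i ∈ p.support
  · rw [Finset.sum_eq_single i]
    · simp
    · intro b _ hbi
      rw [HahnSeries.coeff_single_of_ne]
      simpa using fun h => hbi (by exact_mod_cast h.symm)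
    · intro h; exact absurd hi h
  · rw [Finset.sum_eq_zero, (Polynomial.notMem_support_iff.mp hi)]
    intro b hb
    rw [HahnSeries.coeff_single_of_ne]
    intro h
    have : b = i := by exact_mod_cast (neg_inj.mp h).symm
    exact hi (this ▸ hb)

lemma polyToLS_coeff_pos (p : Polynomial Fq) (e : ℤ) (he : 0 < e) :
    (polyToLS p).coeff e = 0 := by
  classical
  rw [polyToLS, coeff_finsetSum]
  refine Finset.sum_eq_zero fun b _ => ?_
  rw [HahnSeries.coeff_single_of_ne]
  intro h
  omega

lemma polyToLS_ne_zero {p : Polynomial Fq} (hp : p ≠ 0) : polyToLS p ≠ 0 := by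
  intro h
  apply hp
  ext i
  have := polyToLS_coeff_neg p i
  rw [h] at this
  simpa using this.symm

lemma polyToLS_order {p : Polynomial Fq} (hp : p ≠ 0) :
    (polyToLS p).order = -(p.natDegree : ℤ) := by
  refine le_antisymm ?_ ?_
  · apply HahnSeries.order_le_of_coeff_ne_zero
    rw [polyToLS_coeff_neg]
    simpa [Polynomial.coeff_natDegree] using Polynomial.leadingCoeff_ne_zero.mpr hp
  · by_contra hlt
    push_neg at hlt
    have hcoeff := mt HahnSeries.coeff_order_eq_zero.mp (polyToLS_ne_zero hp)
    set o := (polyToLS p).order with ho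
    rcases le_or_gt o 0 with h0 | h0
    · obtain ⟨j, hj⟩ : ∃ j : ℕ, o = -(j : ℤ) := ⟨(-o).toNat, by omega⟩
      rw [hj, polyToLS_coeff_neg] at hcoeff
      have : j ≤ p.natDegree := Polynomial.le_natDegree_of_ne_zero hcoeff
      omega
    · exact hcoeff (polyToLS_coeff_pos p o h0)

noncomputable def phi : RatFunc Fq →+* LaurentSeries Fq :=
  RatFunc.liftRingHom (Polynomial.aeval (lsX : LaurentSeries Fq)).toRingHom
    (fun p hp => by
      rw [Submonoid.mem_comap]
      rw [mem_nonZeroDivisors_iff_ne_zero] at hp ⊢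
      show Polynomial.aeval (lsX : LaurentSeries Fq) p ≠ 0
      rw [← polyToLS_eq_aeval]
      exact polyToLS_ne_zero hp)

lemma phi_eq_ratToLS : (phi : RatFunc Fq → LaurentSeries Fq) = ratToLS := by
  funext f
  rw [ratToLS, phi, RatFunc.liftRingHom_apply, polyToLS_eq_aeval, polyToLS_eq_aeval]
  rfl

lemma phi_algebraMap (p : Polynomial Fq) :
    phi (algebraMap (Polynomial Fq) (RatFunc Fq) p) = polyToLS p := by
  rw [phi, RatFunc.liftRingHom_apply, RatFunc.num_algebraMap, RatFunc.denom_algebraMap]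
  have h1 : polyToLS (1 : Polynomial Fq) = 1 := by
    rw [polyToLS_eq_aeval]; simp
  show Polynomial.aeval (lsX : LaurentSeries Fq) p / Polynomial.aeval (lsX : LaurentSeries Fq) (1 : Polynomial Fq) = _
  rw [← polyToLS_eq_aeval, ← polyToLS_eq_aeval, h1, div_one]

end PQM
noncomputable def lsFrac {Fq : Type*} [Field Fq] (β : LaurentSeries Fq) :
    LaurentSeries Fq :=
  ⟨fun e => if 1 ≤ e then β.coeff e else 0, by
    apply β.isPWO_support'.mono
    intro e he
    by_cases h : (1 : ℤ) ≤ e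
    · simpa [Function.mem_support, h] using he
    · simp [Function.mem_support, h] at he⟩

namespace PQM
variable {Fq : Type*} [Field Fq]

lemma order_inv (x : LaurentSeries Fq) : (x⁻¹).order = -x.order := by
  rcases eq_or_ne x 0 with rfl | hx
  · simp
  · have h1 : x * x⁻¹ = 1 := mul_inv_cancel₀ hx
    have := HahnSeries.order_mul hx (inv_ne_zero hx)
    rw [h1, HahnSeries.order_one] at this
    omega

lemma order_zpow (x : LaurentSeries Fq) (hx : x ≠ 0) (m : ℤ) :
    (x ^ m).order = m * x.order := by
  rcases le_or_gt 0 m with hm | hm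
  · obtain ⟨a, rfl⟩ := Int.eq_ofNat_of_zero_le hm
    rw [zpow_natCast, HahnSeries.order_pow]
    simp [nsmul_eq_mul]
  · obtain ⟨a, rfl⟩ : ∃ a : ℕ, m = -(a:ℤ) := ⟨(-m).toNat, by omega⟩
    rw [zpow_neg, zpow_natCast, order_inv, HahnSeries.order_pow]
    simp [nsmul_eq_mul]

lemma coeff_zero_of_cases {x : LaurentSeries Fq} {e : ℤ}
    (h : x = 0 ∨ e < x.order) : x.coeff e = 0 := by
  rcases h with rfl | h
  · simp [HahnSeries.coeff_zero]
  · exact HahnSeries.coeff_eq_zero_of_lt_order h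

lemma order_ge_of_coeff {x : LaurentSeries Fq} {c : ℤ}
    (h : ∀ e, e < c → x.coeff e = 0) (hx : x ≠ 0) : c ≤ x.order := by
  by_contra hc
  push_neg at hc
  exact (mt HahnSeries.coeff_order_eq_zero.mp hx) (h _ hc)

lemma order_add_of_lt {x y : LaurentSeries Fq} (hx : x ≠ 0)
    (h : y = 0 ∨ x.order < y.order) : x + y ≠ 0 ∧ (x + y).order = x.order := by
  have hcy : ∀ e, e ≤ x.order → y.coeff e = 0 := by
    intro e he
    rcases h with rfl | h
    · simp [HahnSeries.coeff_zero]
    · exact HahnSeries.coeff_eq_zero_of_lt_order (lt_of_le_of_lt he h)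
  have hco : (x + y).coeff x.order ≠ 0 := by
    rw [HahnSeries.coeff_add, hcy _ le_rfl, add_zero]
    exact mt HahnSeries.coeff_order_eq_zero.mp hx
  have hne : x + y ≠ 0 := by
    intro h0; rw [h0] at hco; simp [HahnSeries.coeff_zero] at hco
  refine ⟨hne, le_antisymm (HahnSeries.order_le_of_coeff_ne_zero hco) ?_⟩
  refine order_ge_of_coeff (fun e he => ?_) hne
  rw [HahnSeries.coeff_add, HahnSeries.coeff_eq_zero_of_lt_order he, hcy _ he.le, add_zero]

lemma lsFrac_coeff (β : LaurentSeries Fq) (e : ℤ) :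
    (lsFrac β).coeff e = if 1 ≤ e then β.coeff e else 0 := rfl

lemma lsFrac_add (a b : LaurentSeries Fq) :
    lsFrac (a + b) = lsFrac a + lsFrac b := by
  ext e
  rw [HahnSeries.coeff_add, lsFrac_coeff, lsFrac_coeff, lsFrac_coeff, HahnSeries.coeff_add]
  split <;> simp

lemma lsFrac_eq_self {x : LaurentSeries Fq} (h : ∀ e, e ≤ 0 → x.coeff e = 0) :
    lsFrac x = x := by
  ext e
  rw [lsFrac_coeff]
  split
  · rfl
  · exact (h e (by omega)).symm

lemma lsFrac_eq_zero {x : LaurentSeries Fq} (h : ∀ e, 1 ≤ e → x.coeff e = 0) :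
    lsFrac x = 0 := by
  ext e
  rw [lsFrac_coeff]
  split
  · rw [h e ‹_›]; rfl
  · rfl

end PQM
namespace PQM
variable {Fq : Type*} [Field Fq]

lemma order_div {x y : LaurentSeries Fq} (hx : x ≠ 0) (hy : y ≠ 0) :
    (x / y).order = x.order - y.order := by
  rw [div_eq_mul_inv, HahnSeries.order_mul hx (inv_ne_zero hy), order_inv]
  ring

lemma phi_div_apply (u v : Polynomial Fq) :
    phi (algebraMap (Polynomial Fq) (RatFunc Fq) u / algebraMap (Polynomial Fq) (RatFunc Fq) v)
      = polyToLS u / polyToLS v := by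
  rw [map_div₀, phi_algebraMap, phi_algebraMap]

lemma phi_div_ne_zero {u v : Polynomial Fq} (hu : u ≠ 0) (hv : v ≠ 0) :
    phi (algebraMap (Polynomial Fq) (RatFunc Fq) u / algebraMap (Polynomial Fq) (RatFunc Fq) v) ≠ 0 := by
  rw [phi_div_apply]
  exact div_ne_zero (polyToLS_ne_zero hu) (polyToLS_ne_zero hv)

lemma order_phi_div {u v : Polynomial Fq} (hu : u ≠ 0) (hv : v ≠ 0) :
    (phi (algebraMap (Polynomial Fq) (RatFunc Fq) u /
      algebraMap (Polynomial Fq) (RatFunc Fq) v)).order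
      = (v.natDegree : ℤ) - u.natDegree := by
  rw [phi_div_apply, order_div (polyToLS_ne_zero hu) (polyToLS_ne_zero hv),
    polyToLS_order hu, polyToLS_order hv]
  ring

end PQM
noncomputable def digitPartialSum {Fq : Type*} [Field Fq] (P Q : Polynomial Fq)
    (s : ℤ → Polynomial Fq) (k : ℤ) (t : ℕ) : RatFunc Fq :=
  ∑ i ∈ Finset.Icc (-(t : ℤ)) k,
    (algebraMap (Polynomial Fq) (RatFunc Fq) (s i) /
      algebraMap (Polynomial Fq) (RatFunc Fq) Q) *
    ((algebraMap (Polynomial Fq) (RatFunc Fq) P) /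
      (algebraMap (Polynomial Fq) (RatFunc Fq) Q)) ^ i

def mahlerY (q : ℕ) (r n : ℤ) : Set ℝ :=
  {x : ℝ | ∃ i : ℕ, 1 ≤ i ∧ (q : ℝ) ^ (-(r * i) - n) ≤ x ∧ x < (q : ℝ) ^ (-(r * i))}

noncomputable def lsAbs {Fq : Type*} [Field Fq] (q : ℕ) (β : LaurentSeries Fq) : ℝ :=
  if β = 0 then 0 else (q : ℝ) ^ (-β.order)

/-- **Theorem (Mahler's problem for finite fields).** Let `α ∈ F_q((X⁻¹))` have
`P/Q`-digit expansion with digit string `(s_i)`. Then `|{α(P/Q)^i}| ∈ Y_{P/Q} ∪ {0}`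
for all sufficiently large `i` if and only if the digit string is eventually minimal,
i.e. `deg s_{-i} < deg Q` for all sufficiently large `i`. -/
theorem pq_mahler_finite_fields (Fq : Type*) [Field Fq] [Fintype Fq]
    (P Q : Polynomial Fq) (hP : P ≠ 0) (hQ : Q ≠ 0) (hcop : IsCoprime P Q)
    (hdeg : Q.degree < P.degree) (hQdeg : 1 ≤ Q.degree)
    (α : LaurentSeries Fq) (s : ℤ → Polynomial Fq) (k : ℤ)
    (hdig : ∀ i, (s i).degree < P.degree)
    (htop : ∀ i, k < i → s i = 0)
    (hW : ∀ t : ℕ, ∃ w : Polynomial Fq,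
      algebraMap (Polynomial Fq) (RatFunc Fq) w =
        ((algebraMap (Polynomial Fq) (RatFunc Fq) P) /
          (algebraMap (Polynomial Fq) (RatFunc Fq) Q)) ^ (t : ℤ) *
          digitPartialSum P Q s k t)
    (hconv : ∀ N : ℤ, ∃ T : ℕ, ∀ t : ℕ, T ≤ t → ∀ e : ℤ, e ≤ N →
      (α - ratToLS (digitPartialSum P Q s k t)).coeff e = 0) :
    (∃ i₀ : ℕ, ∀ i : ℕ, i₀ ≤ i →
        lsAbs (Fintype.card Fq)
          (lsFrac (ratToLS (((algebraMap (Polynomial Fq) (RatFunc Fq) P) /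
              (algebraMap (Polynomial Fq) (RatFunc Fq) Q)) ^ (i : ℤ)) * α)) ∈
          mahlerY (Fintype.card Fq)
            ((P.natDegree : ℤ) - (Q.natDegree : ℤ)) (Q.natDegree : ℤ) ∪ {0}) ↔
      (∃ i₀ : ℕ, ∀ i : ℕ, i₀ ≤ i → (s (-(i : ℤ))).degree < Q.degree) := by
  classical
  set qc : ℕ := Fintype.card Fq with hqc
  have hq1 : (1 : ℝ) < (qc : ℝ) := by
    have h := Fintype.one_lt_card (α := Fq)
    exact_mod_cast h
  set dP : ℤ := (P.natDegree : ℤ) with hdP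
  set dQ : ℤ := (Q.natDegree : ℤ) with hdQ
  set r : ℤ := dP - dQ with hrdef
  have hnat : Q.natDegree < P.natDegree := Polynomial.natDegree_lt_natDegree hQ hdeg
  have hn1 : 1 ≤ dQ := by
    have h0 : 0 < Q.degree := lt_of_lt_of_le (by exact_mod_cast zero_lt_one) hQdeg
    have := Polynomial.natDegree_pos_iff_degree_pos.mpr h0
    simp only [hdQ]
    exact_mod_cast this
  have hr1 : 1 ≤ r := by simp only [hrdef, hdP, hdQ]; omega
  set F : RatFunc Fq := algebraMap (Polynomial Fq) (RatFunc Fq) P /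
      algebraMap (Polynomial Fq) (RatFunc Fq) Q with hFdef
  have haP : algebraMap (Polynomial Fq) (RatFunc Fq) P ≠ 0 := RatFunc.algebraMap_ne_zero hP
  have haQ : algebraMap (Polynomial Fq) (RatFunc Fq) Q ≠ 0 := RatFunc.algebraMap_ne_zero hQ
  have hF0 : F ≠ 0 := div_ne_zero haP haQ
  set S : ℕ → RatFunc Fq := digitPartialSum P Q s k with hSdef
  choose w hw using hW
  set ε : ℕ → LaurentSeries Fq := fun i => PQM.phi (F ^ (i : ℤ)) * (α - PQM.phi (S i)) with hεdef
  have hεeq : ∀ i : ℕ, ε i = PQM.phi (F ^ (i : ℤ)) * (α - PQM.phi (S i)) := fun i => rfl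
  -- order of phi (F ^ m)
  have hφF : PQM.phi F ≠ 0 ∧ (PQM.phi F).order = -r := by
    constructor
    · exact PQM.phi_div_ne_zero hP hQ
    · rw [hFdef, PQM.order_phi_div hP hQ]; simp only [hrdef, hdP, hdQ]; ring
  have hφFm : ∀ m : ℤ, PQM.phi (F ^ m) ≠ 0 ∧ (PQM.phi (F ^ m)).order = m * (-r) := by
    intro m
    rw [map_zpow₀]
    exact ⟨zpow_ne_zero _ hφF.1, by rw [PQM.order_zpow _ hφF.1, hφF.2]⟩
  -- support of ε
  have hεsupp : ∀ (i : ℕ) (e : ℤ), e ≤ 0 → (ε i).coeff e = 0 := by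
    intro i e he
    obtain ⟨T, hT⟩ := hconv (e + r * i)
    set t : ℕ := max T i with htdef
    have htT : T ≤ t := le_max_left _ _
    have hti : i ≤ t := le_max_right _ _
    have hg : ∀ e', e' ≤ e + r * i → (α - PQM.phi (S t)).coeff e' = 0 := by
      intro e' he'
      have h := hT t htT e' he'
      rwa [← congrFun PQM.phi_eq_ratToLS] at h
    have hsplit : ε i = PQM.phi (F ^ (i : ℤ)) * (α - PQM.phi (S t)) +
        PQM.phi (F ^ (i : ℤ) * (S t - S i)) := by
      rw [hεeq i, map_mul, map_sub]
      ring
    rw [hsplit, HahnSeries.coeff_add]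
    have h1 : (PQM.phi (F ^ (i : ℤ)) * (α - PQM.phi (S t))).coeff e = 0 := by
      rcases eq_or_ne (α - PQM.phi (S t)) 0 with h0 | h0
      · rw [h0, mul_zero]; simp
      · apply PQM.coeff_zero_of_cases
        right
        have hgo : e + r * i < (α - PQM.phi (S t)).order := by
          by_contra hc; push_neg at hc
          exact (mt HahnSeries.coeff_order_eq_zero.mp h0) (hg _ hc)
        rw [HahnSeries.order_mul (hφFm i).1 h0, (hφFm i).2]
        have : (i : ℤ) * (-r) = -(r * i) := by ring
        linarith
    have h2 : (PQM.phi (F ^ (i : ℤ) * (S t - S i))).coeff e = 0 := by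
      have hsub : Finset.Icc (-(i : ℤ)) k ⊆ Finset.Icc (-(t : ℤ)) k :=
        Finset.Icc_subset_Icc (by omega) le_rfl
      have hexp : F ^ (i : ℤ) * (S t - S i) =
          ∑ j ∈ Finset.Icc (-(t : ℤ)) k \ Finset.Icc (-(i : ℤ)) k,
            (algebraMap (Polynomial Fq) (RatFunc Fq) (s j) /
              algebraMap (Polynomial Fq) (RatFunc Fq) Q) * F ^ (j + (i : ℤ)) := by
        have : S t - S i = ∑ j ∈ Finset.Icc (-(t : ℤ)) k \ Finset.Icc (-(i : ℤ)) k,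
            (algebraMap (Polynomial Fq) (RatFunc Fq) (s j) /
              algebraMap (Polynomial Fq) (RatFunc Fq) Q) * F ^ j := by
          rw [hSdef]
          simp only [digitPartialSum]
          rw [Finset.sum_sdiff_eq_sub hsub]
        rw [this, Finset.mul_sum]
        refine Finset.sum_congr rfl fun j hj => ?_
        rw [zpow_add₀ hF0]
        ring
      rw [hexp, map_sum, PQM.coeff_finsetSum]
      refine Finset.sum_eq_zero fun j hj => ?_
      have hj' : j + (i : ℤ) ≤ -1 := by
        simp only [Finset.mem_sdiff, Finset.mem_Icc, not_and, not_le] at hj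
        omega
      rcases eq_or_ne (s j) 0 with h0 | h0
      · simp [h0]
      · apply PQM.coeff_zero_of_cases
        right
        have hsd : (s j).natDegree < P.natDegree := Polynomial.natDegree_lt_natDegree h0 (hdig j)
        rw [map_mul, HahnSeries.order_mul (PQM.phi_div_ne_zero h0 hQ) (hφFm (j + i)).1,
          PQM.order_phi_div h0 hQ, (hφFm (j + i)).2]
        have h5 : r ≤ (j + (i : ℤ)) * (-r) := by nlinarith
        have h6 : ((s j).natDegree : ℤ) ≤ dP - 1 := by simp only [hdP]; omega
        simp only [hrdef] at h5 ⊢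
        linarith [h5, h6, hn1]
    rw [h1, h2, add_zero]
  -- decomposition
  have hdecomp : ∀ i : ℕ, PQM.phi (F ^ (i : ℤ)) * α = polyToLS (w i) + ε i := by
    intro i
    have h1 : PQM.phi (F ^ (i : ℤ)) * PQM.phi (S i) = polyToLS (w i) := by
      rw [← map_mul, ← hw i, PQM.phi_algebraMap]
    rw [hεeq i, mul_sub, ← h1]
    ring
  have hfrac : ∀ i : ℕ, lsFrac (PQM.phi (F ^ (i : ℤ)) * α) = ε i := by
    intro i
    rw [hdecomp i, PQM.lsFrac_add,
      PQM.lsFrac_eq_zero (fun e he => PQM.polyToLS_coeff_pos (w i) e (by omega)),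
      PQM.lsFrac_eq_self (hεsupp i), zero_add]
  -- recursion
  have hrec : ∀ i : ℕ, ε i =
      PQM.phi (algebraMap (Polynomial Fq) (RatFunc Fq) (s (-(i : ℤ) - 1)) /
        algebraMap (Polynomial Fq) (RatFunc Fq) P) +
      PQM.phi (algebraMap (Polynomial Fq) (RatFunc Fq) Q /
        algebraMap (Polynomial Fq) (RatFunc Fq) P) * ε (i + 1) := by
    intro i
    have hQPF : algebraMap (Polynomial Fq) (RatFunc Fq) Q /
        algebraMap (Polynomial Fq) (RatFunc Fq) P = F⁻¹ := by
      rw [hFdef, inv_div]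
    have hsd : S (i + 1) - S i = (algebraMap (Polynomial Fq) (RatFunc Fq) (s (-(i : ℤ) - 1)) /
        algebraMap (Polynomial Fq) (RatFunc Fq) Q) * F ^ (-(i : ℤ) - 1) := by
      by_cases hk : -(i : ℤ) - 1 ≤ k
      · rw [hSdef]
        simp only [digitPartialSum]
        have hIcc : Finset.Icc (-((i + 1 : ℕ) : ℤ)) k = insert (-(i : ℤ) - 1) (Finset.Icc (-(i : ℤ)) k) := by
          ext x
          simp only [Finset.mem_Icc, Finset.mem_insert]
          push_cast
          omega
        rw [hIcc, Finset.sum_insert (by simp only [Finset.mem_Icc]; omega)]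
        rw [add_sub_cancel_right]
      · push_neg at hk
        have h1 : s (-(i : ℤ) - 1) = 0 := htop _ (by omega)
        have he1 : Finset.Icc (-((i + 1 : ℕ) : ℤ)) k = ∅ := Finset.Icc_eq_empty (by push_cast; omega)
        have he2 : Finset.Icc (-(i : ℤ)) k = ∅ := Finset.Icc_eq_empty (by omega)
        rw [hSdef]
        simp only [digitPartialSum, he1, he2, h1]
        simp
    have hterm : F ^ (i : ℤ) * (S (i + 1) - S i) =
        algebraMap (Polynomial Fq) (RatFunc Fq) (s (-(i : ℤ) - 1)) /
          algebraMap (Polynomial Fq) (RatFunc Fq) P := by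
      rw [hsd]
      have hFF : F ^ (i : ℤ) * F ^ (-(i : ℤ) - 1) = F⁻¹ := by
        rw [← zpow_add₀ hF0, show (i : ℤ) + (-(i : ℤ) - 1) = -1 by ring, zpow_neg_one]
      calc F ^ (i : ℤ) * ((algebraMap (Polynomial Fq) (RatFunc Fq) (s (-(i : ℤ) - 1)) /
            algebraMap (Polynomial Fq) (RatFunc Fq) Q) * F ^ (-(i : ℤ) - 1))
          = (algebraMap (Polynomial Fq) (RatFunc Fq) (s (-(i : ℤ) - 1)) /
            algebraMap (Polynomial Fq) (RatFunc Fq) Q) * (F ^ (i : ℤ) * F ^ (-(i : ℤ) - 1)) := by ring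
        _ = (algebraMap (Polynomial Fq) (RatFunc Fq) (s (-(i : ℤ) - 1)) /
            algebraMap (Polynomial Fq) (RatFunc Fq) Q) * (algebraMap (Polynomial Fq) (RatFunc Fq) Q /
            algebraMap (Polynomial Fq) (RatFunc Fq) P) := by rw [hFF, hQPF]
        _ = _ := by
            field_simp
    have hmain : ε i - PQM.phi (algebraMap (Polynomial Fq) (RatFunc Fq) Q /
        algebraMap (Polynomial Fq) (RatFunc Fq) P) * ε (i + 1) =
        PQM.phi (F ^ (i : ℤ) * (S (i + 1) - S i)) := by
      have h2 : PQM.phi (algebraMap (Polynomial Fq) (RatFunc Fq) Q /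
          algebraMap (Polynomial Fq) (RatFunc Fq) P) * PQM.phi (F ^ (((i + 1 : ℕ)) : ℤ)) =
          PQM.phi (F ^ (i : ℤ)) := by
        rw [← map_mul, hQPF]
        congr 1
        rw [← zpow_neg_one, ← zpow_add₀ hF0]
        congr 1
        push_cast
        ring
      rw [hεeq i, hεeq (i + 1), map_mul, map_sub, ← h2]
      ring
    rw [hterm] at hmain
    exact sub_eq_iff_eq_add.mp hmain
  have hεord1 : ∀ i, ε i ≠ 0 → 1 ≤ (ε i).order := fun i h =>
    PQM.order_ge_of_coeff (fun e he => hεsupp i e (by omega)) h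
  -- the two directions
  constructor
  · -- from Y-membership to eventually-minimal digits
    rintro ⟨i₀, hY⟩
    by_contra hns
    push_neg at hns
    obtain ⟨i, hi, hbig⟩ := hns (i₀ + 1)
    obtain ⟨i', rfl⟩ : ∃ i', i = i' + 1 := ⟨i - 1, by omega⟩
    have hbig' : Q.degree ≤ (s (-(i' : ℤ) - 1)).degree := by
      rw [show -(i' : ℤ) - 1 = -(((i' + 1 : ℕ)) : ℤ) by push_cast; ring]
      exact hbig
    have hu0 : s (-(i' : ℤ) - 1) ≠ 0 := by
      intro h
      rw [h, Polynomial.degree_zero] at hbig'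
      exact hQ (Polynomial.degree_eq_bot.mp (le_bot_iff.mp hbig'))
    have huQ : Q.natDegree ≤ (s (-(i' : ℤ) - 1)).natDegree :=
      Polynomial.natDegree_le_natDegree hbig'
    have huP : (s (-(i' : ℤ) - 1)).natDegree < P.natDegree :=
      Polynomial.natDegree_lt_natDegree hu0 (hdig _)
    have ht1 : PQM.phi (algebraMap (Polynomial Fq) (RatFunc Fq) (s (-(i' : ℤ) - 1)) /
        algebraMap (Polynomial Fq) (RatFunc Fq) P) ≠ 0 := PQM.phi_div_ne_zero hu0 hP
    have ht1o : (PQM.phi (algebraMap (Polynomial Fq) (RatFunc Fq) (s (-(i' : ℤ) - 1)) /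
        algebraMap (Polynomial Fq) (RatFunc Fq) P)).order
        = dP - (s (-(i' : ℤ) - 1)).natDegree := PQM.order_phi_div hu0 hP
    have ht2 : PQM.phi (algebraMap (Polynomial Fq) (RatFunc Fq) Q /
          algebraMap (Polynomial Fq) (RatFunc Fq) P) * ε (i' + 1) = 0 ∨
        (PQM.phi (algebraMap (Polynomial Fq) (RatFunc Fq) (s (-(i' : ℤ) - 1)) /
          algebraMap (Polynomial Fq) (RatFunc Fq) P)).order <
        (PQM.phi (algebraMap (Polynomial Fq) (RatFunc Fq) Q /
          algebraMap (Polynomial Fq) (RatFunc Fq) P) * ε (i' + 1)).order := by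
      rcases eq_or_ne (ε (i' + 1)) 0 with h0 | h0
      · left; rw [h0, mul_zero]
      · right
        rw [ht1o, HahnSeries.order_mul (PQM.phi_div_ne_zero hQ hP) h0,
          PQM.order_phi_div hQ hP]
        have := hεord1 (i' + 1) h0
        have h6 : dP - ((s (-(i' : ℤ) - 1)).natDegree : ℤ) ≤ r := by
          simp only [hrdef, hdP, hdQ]; omega
        simp only [hrdef, hdP, hdQ] at h6 ⊢
        omega
    have hkey := PQM.order_add_of_lt ht1 ht2
    rw [← hrec i'] at hkey
    have hYi := hY i' (by omega)
    rw [show ratToLS (F ^ ((i' : ℕ) : ℤ)) = PQM.phi (F ^ ((i' : ℕ) : ℤ)) from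
      (congrFun PQM.phi_eq_ratToLS _).symm, hfrac i'] at hYi
    rw [lsAbs, if_neg hkey.1, hkey.2, ht1o] at hYi
    set d : ℤ := dP - (s (-(i' : ℤ) - 1)).natDegree with hd
    have hd1 : 1 ≤ d := by simp only [hd, hdP]; omega
    have hdr : d ≤ r := by simp only [hd, hrdef, hdP, hdQ]; omega
    rcases hYi with hmem | h0
    · obtain ⟨m, hm1, hlow, hupp⟩ := hmem
      have hrm : r ≤ r * (m : ℤ) := le_mul_of_one_le_right (by omega) (by exact_mod_cast hm1)
      have hle : (qc : ℝ) ^ (-(r * (m : ℤ))) ≤ (qc : ℝ) ^ (-d) :=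
        zpow_le_zpow_right₀ hq1.le (by omega)
      exact absurd hupp (not_lt.mpr hle)
    · rw [Set.mem_singleton_iff] at h0
      have : (0 : ℝ) < (qc : ℝ) ^ (-d) := zpow_pos (by linarith) _
      linarith [this, h0.le, h0.ge]
  · -- from eventually-minimal digits to Y-membership
    rintro ⟨i₀, hmin⟩
    refine ⟨i₀, fun i hi => ?_⟩
    rw [show ratToLS (F ^ ((i : ℕ) : ℤ)) = PQM.phi (F ^ ((i : ℕ) : ℤ)) from
      (congrFun PQM.phi_eq_ratToLS _).symm, hfrac i]
    rcases eq_or_ne (ε i) 0 with h0 | h0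
    · right
      rw [lsAbs, if_pos h0]
      rfl
    · left
      have hdsmall : ∀ j : ℕ, i₀ ≤ j → s (-(j : ℤ) - 1) = 0 ∨
          (s (-(j : ℤ) - 1) ≠ 0 ∧ (s (-(j : ℤ) - 1)).natDegree < Q.natDegree) := by
        intro j hj
        rcases eq_or_ne (s (-(j : ℤ) - 1)) 0 with h | h
        · exact Or.inl h
        · refine Or.inr ⟨h, ?_⟩
          have hthis := hmin (j + 1) (by omega)
          rw [show -(((j + 1 : ℕ)) : ℤ) = -(j : ℤ) - 1 by push_cast; ring] at hthis
          exact Polynomial.natDegree_lt_natDegree h hthis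
      have hC1 : ∀ j : ℕ, i₀ ≤ j → ε j ≠ 0 → r + 1 ≤ (ε j).order := by
        intro j hj hne
        refine PQM.order_ge_of_coeff (fun e he => ?_) hne
        rw [hrec j, HahnSeries.coeff_add]
        have c1 : (PQM.phi (algebraMap (Polynomial Fq) (RatFunc Fq) (s (-(j : ℤ) - 1)) /
            algebraMap (Polynomial Fq) (RatFunc Fq) P)).coeff e = 0 := by
          rcases hdsmall j hj with h | ⟨hne', hlt⟩
          · rw [h]
            simp
          · apply PQM.coeff_zero_of_cases
            right
            rw [PQM.order_phi_div hne' hP]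
            simp only [hrdef, hdP, hdQ] at he ⊢
            omega
        have c2 : (PQM.phi (algebraMap (Polynomial Fq) (RatFunc Fq) Q /
            algebraMap (Polynomial Fq) (RatFunc Fq) P) * ε (j + 1)).coeff e = 0 := by
          rcases eq_or_ne (ε (j + 1)) 0 with h0' | h0'
          · rw [h0', mul_zero]; simp
          · apply PQM.coeff_zero_of_cases
            right
            rw [HahnSeries.order_mul (PQM.phi_div_ne_zero hQ hP) h0',
              PQM.order_phi_div hQ hP]
            have := hεord1 (j + 1) h0'
            simp only [hrdef, hdP, hdQ] at he ⊢
            omega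
        rw [c1, c2, add_zero]
      have hstruct : ∃ m : ℤ, 1 ≤ m ∧ r * m + 1 ≤ (ε i).order ∧ (ε i).order ≤ r * m + dQ := by
        rcases le_or_gt r dQ with hrn | hrn
        · -- coverage case
          have ho := hC1 i hi h0
          set o := (ε i).order with hodef
          refine ⟨(o - 1) / r, ?_, ?_, ?_⟩
          · rw [Int.le_ediv_iff_mul_le (by omega)]
            omega
          · have hdiv := Int.mul_ediv_add_emod (o - 1) r
            have hmod0 : 0 ≤ (o - 1) % r := Int.emod_nonneg _ (by omega)
            omega
          · have hdiv := Int.mul_ediv_add_emod (o - 1) r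
            have hmodlt : (o - 1) % r < r := Int.emod_lt_of_pos _ (by omega)
            omega
        · -- gap case: r > dQ, induction on order
          obtain ⟨N, hN⟩ : ∃ N : ℕ, (ε i).order = r + 1 + N :=
            ⟨((ε i).order - r - 1).toNat, by have := hC1 i hi h0; omega⟩
          have main : ∀ N : ℕ, ∀ j : ℕ, i₀ ≤ j → ε j ≠ 0 → (ε j).order = r + 1 + N →
              ∃ m : ℤ, 1 ≤ m ∧ r * m + 1 ≤ (ε j).order ∧ (ε j).order ≤ r * m + dQ := by
            intro N
            induction N using Nat.strong_induction_on with
            | _ N IH =>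
              intro j hj hne hord
              by_cases hu : s (-(j : ℤ) - 1) = 0
              · have heq : ε j = PQM.phi (algebraMap (Polynomial Fq) (RatFunc Fq) Q /
                    algebraMap (Polynomial Fq) (RatFunc Fq) P) * ε (j + 1) := by
                  rw [hrec j, hu]
                  simp
                have hne2 : ε (j + 1) ≠ 0 := fun h => hne (by rw [heq, h, mul_zero])
                have hordeq : (ε j).order = r + (ε (j + 1)).order := by
                  rw [heq, HahnSeries.order_mul (PQM.phi_div_ne_zero hQ hP) hne2,
                    PQM.order_phi_div hQ hP]
                have ho2 := hC1 (j + 1) (by omega) hne2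
                obtain ⟨N', hN'1, hN'2⟩ : ∃ N' : ℕ, (ε (j + 1)).order = r + 1 + N' ∧ N' < N :=
                  ⟨((ε (j + 1)).order - r - 1).toNat, by omega, by omega⟩
                obtain ⟨m', hm1', hlo', hhi'⟩ := IH N' hN'2 (j + 1) (by omega) hne2 hN'1
                refine ⟨m' + 1, by omega, ?_, ?_⟩
                · have : r * (m' + 1) = r * m' + r := by ring
                  omega
                · have : r * (m' + 1) = r * m' + r := by ring
                  omega
              · obtain ⟨hu0, hud⟩ := (hdsmall j hj).resolve_left (by exact fun h => hu h)
                have ht1 : PQM.phi (algebraMap (Polynomial Fq) (RatFunc Fq) (s (-(j : ℤ) - 1)) /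
                    algebraMap (Polynomial Fq) (RatFunc Fq) P) ≠ 0 := PQM.phi_div_ne_zero hu0 hP
                have ht1o : (PQM.phi (algebraMap (Polynomial Fq) (RatFunc Fq) (s (-(j : ℤ) - 1)) /
                    algebraMap (Polynomial Fq) (RatFunc Fq) P)).order
                    = dP - (s (-(j : ℤ) - 1)).natDegree := PQM.order_phi_div hu0 hP
                have ht2 : PQM.phi (algebraMap (Polynomial Fq) (RatFunc Fq) Q /
                      algebraMap (Polynomial Fq) (RatFunc Fq) P) * ε (j + 1) = 0 ∨
                    (PQM.phi (algebraMap (Polynomial Fq) (RatFunc Fq) (s (-(j : ℤ) - 1)) /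
                      algebraMap (Polynomial Fq) (RatFunc Fq) P)).order <
                    (PQM.phi (algebraMap (Polynomial Fq) (RatFunc Fq) Q /
                      algebraMap (Polynomial Fq) (RatFunc Fq) P) * ε (j + 1)).order := by
                  rcases eq_or_ne (ε (j + 1)) 0 with h0' | h0'
                  · left; rw [h0', mul_zero]
                  · right
                    rw [ht1o, HahnSeries.order_mul (PQM.phi_div_ne_zero hQ hP) h0',
                      PQM.order_phi_div hQ hP]
                    have := hC1 (j + 1) (by omega) h0'
                    simp only [hrdef, hdP, hdQ] at this ⊢
                    omega
                have hkey := PQM.order_add_of_lt ht1 ht2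
                rw [← hrec j] at hkey
                refine ⟨1, le_rfl, ?_, ?_⟩
                · rw [mul_one, hkey.2, ht1o]
                  simp only [hrdef, hdP, hdQ]
                  omega
                · rw [mul_one, hkey.2, ht1o]
                  simp only [hrdef, hdP, hdQ]
                  omega
          exact main N i hi h0 hN
      obtain ⟨m, hm1, hlo, hhi⟩ := hstruct
      simp only [mahlerY, Set.mem_setOf_eq]
      refine ⟨m.toNat, by omega, ?_, ?_⟩
      · rw [lsAbs, if_neg h0, Int.toNat_of_nonneg (by omega)]
        exact zpow_le_zpow_right₀ hq1.le (by omega)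
      · rw [lsAbs, if_neg h0, Int.toNat_of_nonneg (by omega)]
        exact zpow_lt_zpow_right₀ hq1 (by omega)
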